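/- Let σ ∈ [0,1). Then there exists λ > 0 such that σ(1 + λ²) + (1 − σ)·φ(λ) < 1, where φ(λ) = √(2/π) ∫_λ^∞ (x − λ)² exp(−x²/2) dx. (Consequently, for a nonzero x₀ ∈ ℝ^d with |supp x₀| < d, the uniform weight λ·(1,…,1) achieves a strictly smaller value of the normalized expected squared distance to the scaled subdifferential than the zero weight.) -/

import Mathlib

open MeasureTheory ProbabilityTheory
open scoped Pointwise BigOperators
open Real Filter Set Topology

noncomputable section

/-- `phi t = sqrt(2/pi) * int_t^infty (x-t)^2 exp(-x^2/2) dx`. -/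
def phi (t : ℝ) : ℝ :=
  Real.sqrt (2 / Real.pi) * ∫ x in Set.Ioi t, (x - t) ^ 2 * Real.exp (-x ^ 2 / 2)

lemma aux_deriv (x : ℝ) : HasDerivAt (fun y : ℝ => -y ^ 2 / 2) (-x) x := by
  have h := ((hasDerivAt_pow 2 x).neg).div_const 2
  refine h.congr_deriv ?_
  simp; ring

lemma exp_tendsto_zero : Tendsto (fun x : ℝ => Real.exp (-x ^ 2 / 2)) atTop (𝓝 0) := by
  apply Real.tendsto_exp_atBot.comp
  apply Filter.Tendsto.atBot_div_const (by norm_num : (0:ℝ) < 2)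
  exact tendsto_neg_atTop_atBot.comp (tendsto_pow_atTop (by norm_num : 2 ≠ 0))

lemma integral_x_exp (a : ℝ) :
    ∫ x in Set.Ioi a, x * Real.exp (-x ^ 2 / 2) = Real.exp (-a ^ 2 / 2) := by
  have hint : IntegrableOn (fun x : ℝ => x * Real.exp (-x ^ 2 / 2)) (Set.Ioi a) := by
    have heq : (fun x : ℝ => x * Real.exp (-x ^ 2 / 2))
        = fun x : ℝ => x * Real.exp (-(1/2) * x ^ 2) := by
      funext x; congr 1; congr 1; ring
    rw [heq]
    exact (integrable_mul_exp_neg_mul_sq (by norm_num : (0:ℝ) < 1/2)).integrableOn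
  have hderiv : ∀ x ∈ Set.Ici a, HasDerivAt (fun x : ℝ => -Real.exp (-x ^ 2 / 2))
      (x * Real.exp (-x ^ 2 / 2)) x := by
    intro x _
    have h := ((aux_deriv x).exp).neg
    refine h.congr_deriv ?_
    ring
  have htend : Tendsto (fun x : ℝ => -Real.exp (-x ^ 2 / 2)) atTop (𝓝 (0:ℝ)) := by
    simpa using exp_tendsto_zero.neg
  have key := integral_Ioi_of_hasDerivAt_of_tendsto' hderiv hint htend
  simpa using key

lemma integrable_sq_exp :
    IntegrableOn (fun x : ℝ => x ^ 2 * Real.exp (-x ^ 2 / 2)) (Set.Ioi 0) := by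
  have h := integrableOn_rpow_mul_exp_neg_mul_sq (by norm_num : (0:ℝ) < 1/2)
    (by norm_num : (-1:ℝ) < 2)
  refine h.congr_fun (fun x hx => ?_) measurableSet_Ioi
  dsimp only
  rw [show ((2:ℝ)) = ((2:ℕ):ℝ) by norm_num, Real.rpow_natCast]
  congr 2
  ring

lemma xexp_tendsto_zero :
    Tendsto (fun x : ℝ => x * Real.exp (-x ^ 2 / 2)) atTop (𝓝 0) := by
  have hlo := rpow_mul_exp_neg_mul_sq_isLittleO_exp_neg (by norm_num : (0:ℝ) < 1/2) 1
  have h2 : Tendsto (fun x : ℝ => Real.exp (-(1/2) * x)) atTop (𝓝 0) := by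
    apply Real.tendsto_exp_atBot.comp
    exact tendsto_id.const_mul_atTop_of_neg (by norm_num : (-(1/2) : ℝ) < 0)
  have h3 := hlo.trans_tendsto h2
  simp only [Real.rpow_one] at h3
  have heq : (fun x : ℝ => x * Real.exp (-x ^ 2 / 2))
      = fun x : ℝ => x * Real.exp (-(1/2) * x ^ 2) := by
    funext x; congr 1; congr 1; ring
  rw [heq]; exact h3

lemma integral_sq_exp :
    ∫ x in Set.Ioi (0:ℝ), x ^ 2 * Real.exp (-x ^ 2 / 2) = Real.sqrt (2 * Real.pi) / 2 := by
  have hexpint : IntegrableOn (fun x : ℝ => Real.exp (-x ^ 2 / 2)) (Set.Ioi 0) := by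
    have : (fun x : ℝ => Real.exp (-x ^ 2 / 2)) = fun x : ℝ => Real.exp (-(1/2) * x ^ 2) := by
      funext x; congr 1; ring
    rw [this]
    exact (integrable_exp_neg_mul_sq (by norm_num : (0:ℝ) < 1/2)).integrableOn
  have hderiv : ∀ x ∈ Set.Ici (0:ℝ), HasDerivAt (fun x : ℝ => -(x * Real.exp (-x ^ 2 / 2)))
      (x ^ 2 * Real.exp (-x ^ 2 / 2) - Real.exp (-x ^ 2 / 2)) x := by
    intro x _
    have h := ((hasDerivAt_id x).mul ((aux_deriv x).exp)).neg
    refine h.congr_deriv ?_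
    simp [id]
    ring
  have htend : Tendsto (fun x : ℝ => -(x * Real.exp (-x ^ 2 / 2))) atTop (𝓝 (0:ℝ)) := by
    simpa using xexp_tendsto_zero.neg
  have key := integral_Ioi_of_hasDerivAt_of_tendsto' hderiv (integrable_sq_exp.sub hexpint) htend
  rw [integral_sub integrable_sq_exp hexpint] at key
  norm_num at key
  have hg : ∫ x in Set.Ioi (0:ℝ), Real.exp (-x ^ 2 / 2) = Real.sqrt (2 * Real.pi) / 2 := by
    have := integral_gaussian_Ioi (1/2)
    rw [show (Real.pi / (1/2)) = 2 * Real.pi by ring] at this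
    rw [← this]
    congr 1
    funext x
    congr 1
    ring
  linarith [key, hg]

theorem exists_uniform_weight_better_than_zero (σ : ℝ) (h₀ : 0 ≤ σ) (h₁ : σ < 1) :
    ∃ l : ℝ, 0 < l ∧ σ * (1 + l ^ 2) + (1 - σ) * phi l < 1 := by
  have hπ := Real.pi_pos
  set c : ℝ := (1 - σ) * Real.sqrt (2 / Real.pi) * Real.exp (-(1:ℝ) / 2) with hc
  have hsq2 : (0:ℝ) < Real.sqrt (2 / Real.pi) := Real.sqrt_pos.mpr (by positivity)
  have hcpos : 0 < c := mul_pos (mul_pos (by linarith) hsq2) (Real.exp_pos _)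
  have hσ1 : (0:ℝ) < σ + 1 := by linarith
  set l : ℝ := min 1 (c / (σ + 1)) with hldef
  have hl0 : 0 < l := lt_min one_pos (div_pos hcpos hσ1)
  have hl1 : l ≤ 1 := min_le_left _ _
  refine ⟨l, hl0, ?_⟩
  have hsub : Set.Ioi l ⊆ Set.Ioi (0:ℝ) := Set.Ioi_subset_Ioi hl0.le
  have hIsq : IntegrableOn (fun x : ℝ => x ^ 2 * Real.exp (-x ^ 2 / 2)) (Set.Ioi l) :=
    integrable_sq_exp.mono_set hsub
  have hIx : IntegrableOn (fun x : ℝ => x * Real.exp (-x ^ 2 / 2)) (Set.Ioi l) := by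
    have heq : (fun x : ℝ => x * Real.exp (-x ^ 2 / 2))
        = fun x : ℝ => x * Real.exp (-(1/2) * x ^ 2) := by
      funext x; congr 1; congr 1; ring
    rw [heq]
    exact (integrable_mul_exp_neg_mul_sq (by norm_num : (0:ℝ) < 1/2)).integrableOn
  have hIe : IntegrableOn (fun x : ℝ => Real.exp (-x ^ 2 / 2)) (Set.Ioi l) := by
    have : (fun x : ℝ => Real.exp (-x ^ 2 / 2)) = fun x : ℝ => Real.exp (-(1/2) * x ^ 2) := by
      funext x; congr 1; ring
    rw [this]
    exact (integrable_exp_neg_mul_sq (by norm_num : (0:ℝ) < 1/2)).integrableOn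
  have hIrhs : IntegrableOn
      (fun x : ℝ => x ^ 2 * Real.exp (-x ^ 2 / 2) - l * (x * Real.exp (-x ^ 2 / 2)))
      (Set.Ioi l) := hIsq.sub (hIx.const_mul l)
  have hIlhs : IntegrableOn (fun x : ℝ => (x - l) ^ 2 * Real.exp (-x ^ 2 / 2)) (Set.Ioi l) := by
    refine IntegrableOn.congr_fun
      ((hIsq.sub (hIx.const_mul (2 * l))).add (hIe.const_mul (l ^ 2)))
      (fun x _ => ?_) measurableSet_Ioi
    simp only [Pi.add_apply, Pi.sub_apply]
    ring
  have h1 : (∫ x in Set.Ioi l, (x - l) ^ 2 * Real.exp (-x ^ 2 / 2))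
      ≤ ∫ x in Set.Ioi l,
          (x ^ 2 * Real.exp (-x ^ 2 / 2) - l * (x * Real.exp (-x ^ 2 / 2))) := by
    refine setIntegral_mono_on hIlhs hIrhs measurableSet_Ioi (fun x hx => ?_)
    have hx' : l < x := hx
    have he := (Real.exp_pos (-x ^ 2 / 2)).le
    nlinarith [mul_nonneg (mul_nonneg hl0.le (sub_nonneg.mpr hx'.le)) he]
  have h2 : (∫ x in Set.Ioi l,
        (x ^ 2 * Real.exp (-x ^ 2 / 2) - l * (x * Real.exp (-x ^ 2 / 2))))
      = (∫ x in Set.Ioi l, x ^ 2 * Real.exp (-x ^ 2 / 2)) - l * Real.exp (-l ^ 2 / 2) := by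
    rw [integral_sub hIsq (hIx.const_mul l), MeasureTheory.integral_const_mul, integral_x_exp]
  have h3 : (∫ x in Set.Ioi l, x ^ 2 * Real.exp (-x ^ 2 / 2)) ≤ Real.sqrt (2 * Real.pi) / 2 := by
    rw [← integral_sq_exp]
    refine setIntegral_mono_set integrable_sq_exp ?_ hsub.eventuallyLE
    filter_upwards with x using by positivity
  have hsqrt : Real.sqrt (2 / Real.pi) * (Real.sqrt (2 * Real.pi) / 2) = 1 := by
    rw [div_eq_mul_inv (Real.sqrt (2 * Real.pi)), ← mul_assoc,
      ← Real.sqrt_mul (by positivity) (2 * Real.pi),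
      show (2 / Real.pi) * (2 * Real.pi) = 4 by field_simp; ring,
      show (4:ℝ) = 2 ^ 2 by norm_num, Real.sqrt_sq (by norm_num : (0:ℝ) ≤ 2)]
    norm_num
  have hphi : phi l ≤ 1 - Real.sqrt (2 / Real.pi) * (l * Real.exp (-l ^ 2 / 2)) := by
    have hI : (∫ x in Set.Ioi l, (x - l) ^ 2 * Real.exp (-x ^ 2 / 2))
        ≤ Real.sqrt (2 * Real.pi) / 2 - l * Real.exp (-l ^ 2 / 2) := by
      rw [h2] at h1
      linarith
    calc phi l = Real.sqrt (2 / Real.pi)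
          * ∫ x in Set.Ioi l, (x - l) ^ 2 * Real.exp (-x ^ 2 / 2) := rfl
      _ ≤ Real.sqrt (2 / Real.pi)
          * (Real.sqrt (2 * Real.pi) / 2 - l * Real.exp (-l ^ 2 / 2)) :=
        mul_le_mul_of_nonneg_left hI hsq2.le
      _ = 1 - Real.sqrt (2 / Real.pi) * (l * Real.exp (-l ^ 2 / 2)) := by
        rw [mul_sub, hsqrt]
  have hkey : σ * l < (1 - σ) * Real.sqrt (2 / Real.pi) * Real.exp (-l ^ 2 / 2) := by
    have hstep1 : σ * l ≤ σ * (c / (σ + 1)) :=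
      mul_le_mul_of_nonneg_left (min_le_right _ _) h₀
    have hstep2 : σ * (c / (σ + 1)) < c := by
      rw [mul_div_assoc']
      rw [div_lt_iff₀ hσ1]
      nlinarith
    have hstep3 : c ≤ (1 - σ) * Real.sqrt (2 / Real.pi) * Real.exp (-l ^ 2 / 2) := by
      refine mul_le_mul_of_nonneg_left ?_ (mul_nonneg (by linarith) hsq2.le)
      refine Real.exp_le_exp.mpr ?_
      nlinarith
    linarith
  have hmul := mul_lt_mul_of_pos_right hkey hl0
  have h1σ : (0:ℝ) ≤ 1 - σ := by linarith
  calc σ * (1 + l ^ 2) + (1 - σ) * phi l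
      ≤ σ * (1 + l ^ 2)
        + (1 - σ) * (1 - Real.sqrt (2 / Real.pi) * (l * Real.exp (-l ^ 2 / 2))) := by
        have := mul_le_mul_of_nonneg_left hphi h1σ
        linarith
    _ < 1 := by nlinarith [hmul]

end
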